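/- arXiv:2204.11960 — 3 statements merged into one kernel-verified Lean document; each statement's English description precedes it below -/
import Mathlib

section
/- Every EGRS code of length n+1 ≤ q is a GRS code: Let 1 ≤ k ≤ n ≤ q−1, let α₁,…,αₙ ∈ F_q be pairwise distinct, v₁,…,vₙ ∈ F_q nonzero, and let γ ∈ F_q \ {α₁,…,αₙ}. Set βᵢ = (αᵢ−γ)⁻¹ and wᵢ = vᵢ(αᵢ−γ)^{k−1} for 1 ≤ i ≤ n, β_{n+1} = 0, w_{n+1} = 1. Then EGRS_{k,n}((α₁,…,αₙ),(v₁,…,vₙ)) = GRS_{k,n+1}((β₁,…,β_{n+1}),(w₁,…,w_{n+1})). -/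
open Polynomial

/-- The generalized Reed-Solomon code: codewords `(v i * f (α i))_i` for `deg f ≤ k - 1`. -/
def grsCode (F : Type) [Field F] (k n : ℕ) (α v : Fin n → F) : Set (Fin n → F) :=
  {c | ∃ f : F[X], f.degree < (k : WithBot ℕ) ∧ c = fun i => v i * f.eval (α i)}

/-- The extended generalized Reed-Solomon code: codewords
`(v 1 * f (α 1), …, v n * f (α n), f_{k-1})` for `deg f ≤ k - 1`. -/
def egrsCode (F : Type) [Field F] (k n : ℕ) (α v : Fin n → F) : Set (Fin (n + 1) → F) :=
  {c | ∃ f : F[X], f.degree < (k : WithBot ℕ) ∧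
    c = Fin.snoc (fun i => v i * f.eval (α i)) (f.coeff (k - 1))}

private lemma natDeg_lt_of_degree_lt {F : Type} [Field F] {f : F[X]} {k : ℕ}
    (hk : 1 ≤ k) (h : f.degree < (k : WithBot ℕ)) : f.natDegree < k := by
  rcases eq_or_ne f 0 with rfl | hf
  · simpa using Nat.succ_le_iff.mp hk
  · exact (Polynomial.natDegree_lt_iff_degree_lt hf).2 h

private lemma deg_sum_lt {F : Type} [Field F] (k : ℕ) (hk : 1 ≤ k) (p : ℕ → F[X])
    (hp : ∀ j ∈ Finset.range k, (p j).natDegree ≤ k - 1) :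
    (∑ j ∈ Finset.range k, p j).degree < (k : WithBot ℕ) := by
  refine lt_of_le_of_lt (Polynomial.degree_sum_le _ _) ?_
  rw [Finset.sup_lt_iff (by exact_mod_cast WithBot.bot_lt_coe k)]
  intro j hj
  refine lt_of_le_of_lt (le_trans (Polynomial.degree_le_natDegree)
    (by exact_mod_cast hp j hj : ((p j).natDegree : WithBot ℕ) ≤ ((k - 1 : ℕ) : WithBot ℕ))) ?_
  exact_mod_cast Nat.sub_lt hk one_pos

private lemma term_eq {F : Type} [Field F] (c b x : F) {k j : ℕ} (hj : j < k) :
    c * (x⁻¹) ^ (k - 1 - j) * (b * x⁻¹) ^ j = c * b ^ j * (x⁻¹) ^ (k - 1) := by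
  have h : (k - 1 - j) + j = k - 1 := by omega
  calc c * (x⁻¹) ^ (k - 1 - j) * (b * x⁻¹) ^ j
      = c * b ^ j * ((x⁻¹) ^ (k - 1 - j) * (x⁻¹) ^ j) := by rw [mul_pow]; ring
    _ = c * b ^ j * (x⁻¹) ^ (k - 1) := by rw [← pow_add, h]

private lemma pow_mul_inv_pow {F : Type} [Field F] {a : F} (ha : a ≠ 0) {k m : ℕ}
    (hm : m ≤ k) : a ^ k * (a⁻¹) ^ m = a ^ (k - m) := by
  rw [pow_sub₀ a ha hm, inv_pow]

theorem stmt5 (F : Type) [Field F] [Fintype F] (k n : ℕ)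
    (hk : 1 ≤ k) (hkn : k ≤ n) (hq : n + 1 ≤ Fintype.card F)
    (α v : Fin n → F) (hα : Function.Injective α) (hv : ∀ i, v i ≠ 0)
    (γ : F) (hγ : ∀ i, γ ≠ α i) :
    egrsCode F k n α v =
      grsCode F k (n + 1) (Fin.snoc (fun i => (α i - γ)⁻¹) 0)
        (Fin.snoc (fun i => v i * (α i - γ) ^ (k - 1)) 1) := by
  have ha : ∀ i, α i - γ ≠ 0 := fun i => sub_ne_zero.2 (fun h => hγ i (h.symm))
  ext c
  constructor
  · rintro ⟨f, hf, rfl⟩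
    have hfnat : f.natDegree < k := natDeg_lt_of_degree_lt hk hf
    refine ⟨∑ j ∈ Finset.range k, C (f.coeff j) * X ^ (k - 1 - j) * (1 + C γ * X) ^ j, ?_, ?_⟩
    · refine deg_sum_lt k hk _ (fun j hj => ?_)
      have hj' : j < k := Finset.mem_range.1 hj
      calc (C (f.coeff j) * X ^ (k - 1 - j) * (1 + C γ * X) ^ j).natDegree
          ≤ (C (f.coeff j) * X ^ (k - 1 - j)).natDegree + ((1 + C γ * X) ^ j).natDegree :=
            Polynomial.natDegree_mul_le
        _ ≤ (k - 1 - j) + j * 1 := by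
            gcongr
            · exact le_trans Polynomial.natDegree_mul_le (by simp)
            · refine le_trans Polynomial.natDegree_pow_le ?_
              gcongr
              refine le_trans (Polynomial.natDegree_add_le _ _) ?_
              simp only [Polynomial.natDegree_one]
              refine max_le (by norm_num) (le_trans Polynomial.natDegree_mul_le (by simp))
        _ ≤ k - 1 := by omega
    · funext i
      refine Fin.lastCases ?_ ?_ i
      · simp only [Fin.snoc_last, Polynomial.eval_finset_sum, Polynomial.eval_mul,
          Polynomial.eval_pow, Polynomial.eval_add, Polynomial.eval_one, Polynomial.eval_C,
          Polynomial.eval_X, mul_zero, add_zero, one_pow, mul_one, one_mul]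
        rw [Finset.sum_eq_single (k - 1)]
        · simp
        · intro j hj hne
          have : k - 1 - j ≠ 0 := by
            have := Finset.mem_range.1 hj; omega
          simp [zero_pow this]
        · intro h; exact absurd (Finset.mem_range.2 (by omega)) h
      · intro i
        simp only [Fin.snoc_castSucc, Polynomial.eval_finset_sum, Polynomial.eval_mul,
          Polynomial.eval_pow, Polynomial.eval_add, Polynomial.eval_one, Polynomial.eval_C,
          Polynomial.eval_X]
        have haz : α i - γ ≠ 0 := ha i
        have h1 : 1 + γ * (α i - γ)⁻¹ = α i * (α i - γ)⁻¹ := by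
          have hc : (α i - γ) * (α i - γ)⁻¹ = 1 := mul_inv_cancel₀ haz
          linear_combination -hc
        rw [h1]
        have hsum : ∀ j ∈ Finset.range k,
            f.coeff j * ((α i - γ)⁻¹) ^ (k - 1 - j) * (α i * (α i - γ)⁻¹) ^ j
              = f.coeff j * (α i) ^ j * ((α i - γ)⁻¹) ^ (k - 1) :=
          fun j hj => term_eq _ _ _ (Finset.mem_range.1 hj)
        rw [Finset.sum_congr rfl hsum, ← Finset.sum_mul,
          ← Polynomial.eval_eq_sum_range' hfnat]
        have h2 : (α i - γ) ^ (k - 1) * ((α i - γ)⁻¹) ^ (k - 1) = 1 := by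
          rw [← mul_pow, mul_inv_cancel₀ haz, one_pow]
        calc v i * f.eval (α i)
            = v i * ((α i - γ) ^ (k-1) * ((α i - γ)⁻¹) ^ (k-1)) * f.eval (α i) := by
              rw [h2, mul_one]
          _ = v i * (α i - γ) ^ (k - 1) * (f.eval (α i) * ((α i - γ)⁻¹) ^ (k - 1)) := by
              ring
  · rintro ⟨g, hg, rfl⟩
    have hgnat : g.natDegree < k := natDeg_lt_of_degree_lt hk hg
    refine ⟨∑ m ∈ Finset.range k, C (g.coeff m) * (X - C γ) ^ (k - 1 - m), ?_, ?_⟩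
    · refine deg_sum_lt k hk _ (fun m hm => ?_)
      refine le_trans Polynomial.natDegree_mul_le ?_
      simp only [Polynomial.natDegree_C, zero_add]
      refine le_trans Polynomial.natDegree_pow_le ?_
      rw [Polynomial.natDegree_X_sub_C]
      omega
    · funext i
      refine Fin.lastCases ?_ ?_ i
      · simp only [Fin.snoc_last, one_mul]
        rw [Polynomial.finset_sum_coeff]
        rw [Finset.sum_eq_single 0]
        · have hmon : ((X - C γ) ^ (k - 1) : F[X]).Monic := (monic_X_sub_C γ).pow _
          have hnd : ((X - C γ) ^ (k - 1) : F[X]).natDegree = k - 1 := by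
            rw [Polynomial.natDegree_pow, Polynomial.natDegree_X_sub_C, mul_one]
          have hc := hmon.coeff_natDegree
          rw [hnd] at hc
          rw [Polynomial.coeff_C_mul, Nat.sub_zero, hc, mul_one,
            ← Polynomial.coeff_zero_eq_eval_zero]
        · intro m hm hne
          have hz : ((X - C γ) ^ (k - 1 - m) : F[X]).coeff (k - 1) = 0 := by
            refine Polynomial.coeff_eq_zero_of_natDegree_lt ?_
            rw [Polynomial.natDegree_pow, Polynomial.natDegree_X_sub_C, mul_one]
            have := Finset.mem_range.1 hm; omega
          rw [Polynomial.coeff_C_mul, hz, mul_zero]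
        · intro h; exact absurd (Finset.mem_range.2 (by omega)) h
      · intro i
        simp only [Fin.snoc_castSucc, Polynomial.eval_finset_sum, Polynomial.eval_mul,
          Polynomial.eval_pow, Polynomial.eval_sub, Polynomial.eval_C, Polynomial.eval_X]
        rw [Polynomial.eval_eq_sum_range' hgnat, Finset.mul_sum, Finset.mul_sum]
        refine Finset.sum_congr rfl (fun m hm => ?_)
        have hm' : m < k := Finset.mem_range.1 hm
        have h3 : (α i - γ) ^ (k - 1 - m) = (α i - γ) ^ (k - 1) * ((α i - γ)⁻¹) ^ m :=
          (pow_mul_inv_pow (ha i) (by omega)).symm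
        rw [h3]; ring
end

section
/- Main equivalence theorem: A linear code C ⊆ F_q^n with 2 ≤ n ≤ q is a GRS code if and only if it is an EGRS code. Equivalently, the family of all GRS codes over F_q of length ≥ 2 equals the family of all EGRS codes over F_q of length ≤ q. -/
open Polynomial

namespace StmtAux

variable {F : Type} [Field F]

lemma degLt_iff (p : F[X]) (n : ℕ) :
    p.degree < ((n + 1 : ℕ) : WithBot ℕ) ↔ p.natDegree ≤ n := by
  rcases eq_or_ne p 0 with rfl | hp
  · simp only [degree_zero, natDegree_zero]
    exact ⟨fun _ => Nat.zero_le n, fun _ => WithBot.bot_lt_coe _⟩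
  · rw [← Polynomial.natDegree_lt_iff_degree_lt hp]
    omega

lemma natDegree_reflect_le (p : F[X]) {N : ℕ} (h : p.natDegree ≤ N) :
    (reflect N p).natDegree ≤ N := by
  rw [Polynomial.natDegree_le_iff_coeff_eq_zero]
  intro i hi
  rw [coeff_reflect, revAt_eq_self_of_lt hi]
  exact coeff_eq_zero_of_natDegree_lt (lt_of_le_of_lt h hi)

lemma eval_reflect (p : F[X]) {N : ℕ} (h : p.natDegree ≤ N) {x : F} (hx : x ≠ 0) :
    (reflect N p).eval x = x ^ N * p.eval x⁻¹ := by
  haveI : Invertible (x⁻¹) := invertibleOfNonzero (inv_ne_zero hx)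
  have := Polynomial.eval₂_reflect_mul_pow (RingHom.id F) x⁻¹ N p h
  rw [eval₂_eq_eval_map, eval₂_eq_eval_map, Polynomial.map_id] at this
  have hinv : (⅟ (x⁻¹) : F) = x := by rw [invOf_eq_inv, inv_inv]
  rw [hinv] at this
  rw [Polynomial.map_id] at this
  rw [← this, mul_left_comm, ← mul_pow, mul_inv_cancel₀ hx, one_pow, mul_one]

lemma reflect_reflect (p : F[X]) (N : ℕ) : reflect N (reflect N p) = p := by
  ext i
  rw [coeff_reflect, coeff_reflect, revAt_invol]

lemma coeff_comp_linear (p : F[X]) (t : F) {n : ℕ} (h : p.natDegree ≤ n) :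
    (p.comp (X + C t)).coeff n = p.coeff n := by
  rw [← taylor_apply, taylor_coeff]
  have : hasseDeriv n p = C (p.coeff n) := by
    ext j
    rw [hasseDeriv_coeff]
    cases j with
    | zero => simp
    | succ s =>
      rw [coeff_eq_zero_of_natDegree_lt (by omega), coeff_C]
      simp
  rw [this, eval_C]

/-- The Möbius-type transformation on polynomials of degree ≤ n. -/
noncomputable def Smap (n : ℕ) (a b c : F) (f : F[X]) : F[X] :=
  C c * (reflect n (f.comp (X + C a))).comp (X - C b)

lemma natDegree_comp_X_add_C (p : F[X]) (t : F) :
    (p.comp (X + C t)).natDegree = p.natDegree := by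
  rw [natDegree_comp, natDegree_X_add_C, mul_one]

lemma natDegree_comp_X_sub_C (p : F[X]) (t : F) :
    (p.comp (X - C t)).natDegree = p.natDegree := by
  rw [natDegree_comp, natDegree_X_sub_C, mul_one]

lemma Smap_natDegree_le {n : ℕ} (a b c : F) {f : F[X]} (hf : f.natDegree ≤ n) :
    (Smap n a b c f).natDegree ≤ n := by
  refine le_trans (natDegree_mul_le) ?_
  rw [natDegree_C, zero_add, natDegree_comp_X_sub_C]
  exact natDegree_reflect_le _ (by rwa [natDegree_comp_X_add_C])

lemma Smap_coeff {n : ℕ} (a b c : F) {f : F[X]} (hf : f.natDegree ≤ n) :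
    (Smap n a b c f).coeff n = c * f.eval a := by
  rw [Smap, coeff_C_mul]
  have h1 : (f.comp (X + C a)).natDegree ≤ n := by rwa [natDegree_comp_X_add_C]
  have h2 : (reflect n (f.comp (X + C a))).natDegree ≤ n := natDegree_reflect_le _ h1
  have : X - C b = X + C (-b) := by rw [C_neg]; ring
  rw [this, coeff_comp_linear _ _ h2, coeff_reflect, revAt_le (le_refl n), Nat.sub_self,
    Polynomial.coeff_zero_eq_eval_zero, eval_comp]
  simp

lemma Smap_eval {n : ℕ} (a b c : F) {f : F[X]} (hf : f.natDegree ≤ n) {x : F} (hx : x ≠ b) :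
    (Smap n a b c f).eval x = c * (x - b) ^ n * f.eval (a + (x - b)⁻¹) := by
  have hxb : x - b ≠ 0 := sub_ne_zero.mpr hx
  have h1 : (f.comp (X + C a)).natDegree ≤ n := by rwa [natDegree_comp_X_add_C]
  rw [Smap, eval_mul, eval_C, eval_comp]
  simp only [eval_sub, eval_X, eval_C]
  rw [eval_reflect _ h1 hxb, eval_comp]
  simp only [eval_add, eval_X, eval_C]
  ring_nf

lemma Smap_invol {n : ℕ} (a b : F) {c : F} (hc : c ≠ 0) {f : F[X]} (hf : f.natDegree ≤ n) :
    Smap n b a c⁻¹ (Smap n a b c f) = f := by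
  have h1 : (f.comp (X + C a)).natDegree ≤ n := by rwa [natDegree_comp_X_add_C]
  have e1 : (Smap n a b c f).comp (X + C b)
      = C c * reflect n (f.comp (X + C a)) := by
    rw [Smap, mul_comp, C_comp, comp_assoc]
    have : (X - C b).comp (X + C b) = (X : F[X]) := by
      simp [sub_comp]
    rw [this, comp_X]
  rw [Smap, e1, ← reflect_C_mul, reflect_reflect, mul_comp, C_comp, comp_assoc]
  have : (X + C a).comp (X - C a) = (X : F[X]) := by simp [add_comp]
  rw [this, comp_X, ← mul_assoc, ← C_mul, inv_mul_cancel₀ hc, C_1, one_mul]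

omit [Field F] in
lemma snoc_injective {m : ℕ} {f : Fin m → F} {x : F}
    (hf : Function.Injective f) (hx : ∀ i, f i ≠ x) :
    Function.Injective (Fin.snoc f x : Fin (m+1) → F) := by
  intro j1 j2 h
  rcases Fin.eq_castSucc_or_eq_last j1 with ⟨i1, rfl⟩ | rfl <;>
    rcases Fin.eq_castSucc_or_eq_last j2 with ⟨i2, rfl⟩ | rfl <;>
      simp only [Fin.snoc_castSucc, Fin.snoc_last] at h
  · rw [hf h]
  · exact absurd h (hx i1)
  · exact absurd h.symm (hx i2)
  · rfl

lemma core (n m : ℕ) (a b c : F) (hc : c ≠ 0) (β w : Fin m → F)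
    (hβ : ∀ i, β i ≠ b) :
    egrsCode F (n+1) m β w =
      grsCode F (n+1) (m+1) (Fin.snoc (fun i => a + (β i - b)⁻¹) a)
        (Fin.snoc (fun i => w i * (c * (β i - b) ^ n)) c) := by
  have hsub : ∀ i, β i - b ≠ 0 := fun i => sub_ne_zero.mpr (hβ i)
  ext x
  simp only [egrsCode, grsCode, Set.mem_setOf_eq, Nat.add_sub_cancel]
  constructor
  · rintro ⟨g, hg, rfl⟩
    have hgn : g.natDegree ≤ n := (degLt_iff g n).mp hg
    set f := Smap n b a c⁻¹ g with hfdef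
    have hfn : f.natDegree ≤ n := Smap_natDegree_le _ _ _ hgn
    have hinvol : Smap n a b c f = g := by
      have := Smap_invol b a (inv_ne_zero hc) (f := g) hgn
      rwa [inv_inv] at this
    refine ⟨f, (degLt_iff f n).mpr hfn, ?_⟩
    funext j
    rcases Fin.eq_castSucc_or_eq_last j with ⟨i, rfl⟩ | rfl
    · simp only [Fin.snoc_castSucc]
      have hx : a + (β i - b)⁻¹ ≠ a := by
        intro h
        exact inv_ne_zero (hsub i) (by rwa [add_eq_left] at h)
      rw [Smap_eval b a c⁻¹ hgn hx]
      have h1 : a + (β i - b)⁻¹ - a = (β i - b)⁻¹ := by ring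
      rw [h1, inv_inv]
      have h2 : b + (β i - b) = β i := by ring
      rw [h2]
      have h3 : (β i - b) ^ n * ((β i - b)⁻¹) ^ n = 1 := by
        rw [← mul_pow, mul_inv_cancel₀ (hsub i), one_pow]
      have hcb : c * (β i - b) ^ n ≠ 0 := mul_ne_zero hc (pow_ne_zero _ (hsub i))
      field_simp
      linear_combination (-(w i * eval (β i) g)) * h3
    · simp only [Fin.snoc_last]
      rw [← hinvol, Smap_coeff a b c hfn]
  · rintro ⟨f, hf, rfl⟩
    have hfn : f.natDegree ≤ n := (degLt_iff f n).mp hf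
    refine ⟨Smap n a b c f, (degLt_iff _ n).mpr (Smap_natDegree_le _ _ _ hfn), ?_⟩
    funext j
    rcases Fin.eq_castSucc_or_eq_last j with ⟨i, rfl⟩ | rfl
    · simp only [Fin.snoc_castSucc]
      rw [Smap_eval a b c hfn (hβ i)]
      ring
    · simp only [Fin.snoc_last]
      rw [Smap_coeff a b c hfn]

end StmtAux

theorem stmt6 (F : Type) [Field F] [Fintype F] (m : ℕ) (hm : 1 ≤ m)
    (hq : m + 1 ≤ Fintype.card F) (Co : Set (Fin (m + 1) → F)) :
    (∃ (k : ℕ) (α v : Fin (m + 1) → F), 1 ≤ k ∧ k ≤ m + 1 ∧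
        Function.Injective α ∧ (∀ i, v i ≠ 0) ∧ Co = grsCode F k (m + 1) α v) ↔
      (∃ (k : ℕ) (β w : Fin m → F), 1 ≤ k ∧ k ≤ m + 1 ∧
        Function.Injective β ∧ (∀ i, w i ≠ 0) ∧ Co = egrsCode F k m β w) := by
  constructor
  · rintro ⟨k, α, v, hk1, hk2, hαinj, hv, rfl⟩
    obtain ⟨n, rfl⟩ : ∃ n, k = n + 1 := ⟨k - 1, by omega⟩
    set a := α (Fin.last m) with ha
    set c := v (Fin.last m) with hcdef
    have hc : c ≠ 0 := hv _
    have hne : ∀ i : Fin m, α i.castSucc - a ≠ 0 := fun i =>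
      sub_ne_zero.mpr (fun h => absurd (hαinj h) (Fin.castSucc_lt_last i).ne)
    set β : Fin m → F := fun i => (α i.castSucc - a)⁻¹ with hβdef
    have hβ0 : ∀ i, β i ≠ 0 := fun i => inv_ne_zero (hne i)
    have hcb : ∀ i, c * β i ^ n ≠ 0 := fun i => mul_ne_zero hc (pow_ne_zero _ (hβ0 i))
    set w : Fin m → F := fun i => v i.castSucc / (c * β i ^ n) with hwdef
    refine ⟨n + 1, β, w, hk1, hk2, ?_, ?_, ?_⟩
    · intro i j h
      have h2 : α i.castSucc - a = α j.castSucc - a := inv_injective h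
      exact Fin.castSucc_injective m (hαinj (sub_left_inj.mp h2))
    · intro i
      exact div_ne_zero (hv _) (hcb i)
    · rw [StmtAux.core n m a 0 c hc β w hβ0]
      have hA : α = Fin.snoc (fun i => a + (β i - 0)⁻¹) a := by
        funext j
        rcases Fin.eq_castSucc_or_eq_last j with ⟨i, rfl⟩ | rfl
        · rw [Fin.snoc_castSucc, hβdef, sub_zero, inv_inv]
          ring
        · rw [Fin.snoc_last]
      have hV : v = Fin.snoc (fun i => w i * (c * (β i - 0) ^ n)) c := by
        funext j
        rcases Fin.eq_castSucc_or_eq_last j with ⟨i, rfl⟩ | rfl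
        · rw [Fin.snoc_castSucc, hwdef, sub_zero]
          exact (div_mul_cancel₀ _ (hcb i)).symm
        · rw [Fin.snoc_last]
      rw [← hA, ← hV]
  · rintro ⟨k, β, w, hk1, hk2, hβinj, hw, rfl⟩
    obtain ⟨n, rfl⟩ : ∃ n, k = n + 1 := ⟨k - 1, by omega⟩
    have hns : ¬Function.Surjective β := by
      intro hs
      have := Fintype.card_le_of_surjective β hs
      rw [Fintype.card_fin] at this
      omega
    rw [Function.Surjective] at hns
    push_neg at hns
    obtain ⟨b, hb⟩ := hns
    have hβb : ∀ i, β i ≠ b := hb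
    refine ⟨n + 1, Fin.snoc (fun i => (0 : F) + (β i - b)⁻¹) 0,
      Fin.snoc (fun i => w i * ((1 : F) * (β i - b) ^ n)) 1, hk1, hk2, ?_, ?_,
      StmtAux.core n m 0 b 1 one_ne_zero β w hβb⟩
    · apply StmtAux.snoc_injective
      · intro i j h
        simp only [zero_add] at h
        exact hβinj (sub_left_inj.mp (inv_injective h))
      · intro i h
        simp only [zero_add] at h
        exact inv_ne_zero (sub_ne_zero.mpr (hb i)) h
    · intro i
      rcases Fin.eq_castSucc_or_eq_last i with ⟨i, rfl⟩ | rfl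
      · rw [Fin.snoc_castSucc]
        exact mul_ne_zero (hw i) (by rw [one_mul]; exact pow_ne_zero _ (sub_ne_zero.mpr (hb i)))
      · rw [Fin.snoc_last]
        exact one_ne_zero
end

section
/- Reed–Solomon full-length correspondence: for n = q and 1 ≤ k ≤ q, taking α to enumerate all elements of F_q and v = (1,…,1), the code GRS_{k,q}(α,v) equals EGRS_{k,q−1}(β,w) where β enumerates all nonzero inverses (i.e., all of F_q*) and wⱼ = βⱼ^{−(k−1)}. -/
open Polynomial

private lemma natDeg_le_of_deg_lt {F : Type} [Field F] {k : ℕ} (hk : 1 ≤ k) {f : F[X]}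
    (hf : f.degree < (k : WithBot ℕ)) : f.natDegree ≤ k - 1 := by
  rcases eq_or_ne f 0 with rfl | h
  · simp
  · have := (Polynomial.natDegree_lt_iff_degree_lt h).mpr hf
    omega

private lemma deg_reflect_lt {F : Type} [Field F] {k : ℕ} (hk : 1 ≤ k) (f : F[X]) :
    f.degree < (k : WithBot ℕ) → (Polynomial.reflect (k - 1) f).degree < (k : WithBot ℕ) := by
  intro hf
  rw [Polynomial.degree_lt_iff_coeff_zero] at hf ⊢
  intro n hn
  have hkn : k ≤ n := by exact_mod_cast hn
  rw [Polynomial.coeff_reflect, Polynomial.revAt_eq_self_of_lt (by omega)]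
  exact hf n hn

private lemma reflect_reflect' {F : Type} [Field F] (N : ℕ) (f : F[X]) :
    Polynomial.reflect N (Polynomial.reflect N f) = f := by
  ext i
  simp [Polynomial.coeff_reflect]

private lemma eval_reflect_field {F : Type} [Field F] (N : ℕ) (f : F[X])
    (hf : f.natDegree ≤ N) {x : F} (hx : x ≠ 0) :
    x ^ N * (Polynomial.reflect N f).eval x⁻¹ = f.eval x := by
  letI := invertibleOfNonzero hx
  rw [← invOf_eq_inv x, mul_comm]
  have := Polynomial.eval₂_reflect_mul_pow (RingHom.id F) x N f hf
  exact this

theorem stmt19 (F : Type) [Field F] [Fintype F] (k m : ℕ)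
    (hq : Fintype.card F = m + 1) (hk : 1 ≤ k) (hkq : k ≤ m + 1)
    (α : Fin (m + 1) → F) (hα : Function.Bijective α) (h0 : α (Fin.last m) = 0) :
    grsCode F k (m + 1) α (fun _ => 1) =
      egrsCode F k m (fun j => (α (Fin.castSucc j))⁻¹)
        (fun j => ((α (Fin.castSucc j))⁻¹ ^ (k - 1))⁻¹) := by
  have hne : ∀ j : Fin m, α (Fin.castSucc j) ≠ 0 := by
    intro j hj
    have := hα.1 (hj.trans h0.symm)
    exact absurd this (Fin.ne_of_lt (Fin.castSucc_lt_last j))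
  ext c
  simp only [grsCode, egrsCode, Set.mem_setOf_eq]
  constructor
  · rintro ⟨f, hf, rfl⟩
    refine ⟨Polynomial.reflect (k - 1) f, deg_reflect_lt hk f hf, ?_⟩
    funext i
    induction i using Fin.lastCases with
    | last =>
      simp only [Fin.snoc_last, Polynomial.coeff_reflect,
        Polynomial.revAt_le (le_refl (k - 1)), Nat.sub_self, h0, one_mul,
        ← Polynomial.coeff_zero_eq_eval_zero]
    | cast j =>
      have hx := hne j
      simp only [Fin.snoc_castSucc, one_mul, inv_pow, inv_inv]
      rw [← eval_reflect_field (k - 1) f (natDeg_le_of_deg_lt hk hf) hx]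
  · rintro ⟨g, hg, rfl⟩
    refine ⟨Polynomial.reflect (k - 1) g, deg_reflect_lt hk g hg, ?_⟩
    funext i
    induction i using Fin.lastCases with
    | last =>
      simp only [Fin.snoc_last, h0, one_mul, ← Polynomial.coeff_zero_eq_eval_zero,
        Polynomial.coeff_reflect, Polynomial.revAt_le (Nat.zero_le (k - 1)), Nat.sub_zero]
    | cast j =>
      have hx := hne j
      simp only [Fin.snoc_castSucc, one_mul, inv_pow, inv_inv]
      rw [← eval_reflect_field (k - 1) (Polynomial.reflect (k - 1) g)
        (natDeg_le_of_deg_lt hk (deg_reflect_lt hk g hg)) hx, reflect_reflect']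
end
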